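/- Define α(ρ²) = 2D''(ρ²)/√(D(ρ²) − D'(ρ²)²ρ²/D'(0)) and β(ρ²) = (D'(ρ²) − D'(0))/√(D(ρ²) − D'(ρ²)²ρ²/D'(0)). Then lim_{ρ→0⁺} α(ρ²)β(ρ²)ρ² = −(4/3)D''(0) and lim_{ρ→0⁺} (α(ρ²)ρ²)² = −(8/3)D''(0). -/

import Mathlib

open Real Filter
open Topology

/-- With `α(y) = 2D''(y)/√(D(y) − D'(y)²y/D'(0))` and
`β(y) = (D'(y) − D'(0))/√(D(y) − D'(y)²y/D'(0))`, if `D(0)=0`, `D` is C⁴ near 0,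
`D'(0) > 0` and `D''(0) < 0`, then `lim_{ρ→0⁺} α(ρ²)β(ρ²)ρ² = −(4/3)D''(0)` and
`lim_{ρ→0⁺} (α(ρ²)ρ²)² = −(8/3)D''(0)`. -/
theorem stmt7 (D : ℝ → ℝ) (hD0 : D 0 = 0)
    (hsmooth : ContDiffAt ℝ 4 D 0)
    (hD'0 : 0 < deriv D 0)
    (hD''0 : iteratedDeriv 2 D 0 < 0) :
    Filter.Tendsto
      (fun ρ : ℝ =>
        (2 * iteratedDeriv 2 D (ρ ^ 2) /
            Real.sqrt (D (ρ ^ 2) - (deriv D (ρ ^ 2)) ^ 2 * ρ ^ 2 / deriv D 0)) *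
        ((deriv D (ρ ^ 2) - deriv D 0) /
            Real.sqrt (D (ρ ^ 2) - (deriv D (ρ ^ 2)) ^ 2 * ρ ^ 2 / deriv D 0)) * ρ ^ 2)
      (nhdsWithin 0 (Set.Ioi 0))
      (nhds (-(4 / 3) * iteratedDeriv 2 D 0)) ∧
    Filter.Tendsto
      (fun ρ : ℝ =>
        ((2 * iteratedDeriv 2 D (ρ ^ 2) /
            Real.sqrt (D (ρ ^ 2) - (deriv D (ρ ^ 2)) ^ 2 * ρ ^ 2 / deriv D 0)) * ρ ^ 2) ^ 2)
      (nhdsWithin 0 (Set.Ioi 0))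
      (nhds (-(8 / 3) * iteratedDeriv 2 D 0)) := by
  obtain ⟨u, hu, hDu⟩ := hsmooth.contDiffOn (le_refl 4) (by simp)
  set v := interior u with hv
  have h0v : (0:ℝ) ∈ v := mem_interior_iff_mem_nhds.2 hu
  have hv0 : v ∈ 𝓝 (0:ℝ) := isOpen_interior.mem_nhds h0v
  have hDv : ContDiffOn ℝ 4 D v := hDu.mono interior_subset
  have hd1 : ContDiffOn ℝ 3 (deriv D) v := hDv.deriv_of_isOpen isOpen_interior (by norm_num)
  have hd2 : ContDiffOn ℝ 2 (deriv (deriv D)) v :=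
    hd1.deriv_of_isOpen isOpen_interior (by norm_num)
  have h2 : iteratedDeriv 2 D = deriv (deriv D) := by
    rw [iteratedDeriv_succ, iteratedDeriv_one]
  have hcD : ContinuousAt D 0 := hsmooth.continuousAt
  have hcD'' : ContinuousAt (iteratedDeriv 2 D) 0 := by
    rw [h2]; exact hd2.continuousOn.continuousAt hv0
  have hder2 : HasDerivAt (deriv D) (iteratedDeriv 2 D 0) 0 := by
    rw [h2]
    exact ((hd1.differentiableOn (by norm_num) 0 h0v).differentiableAt hv0).hasDerivAt
  have hevd : ∀ᶠ y in 𝓝 (0:ℝ), HasDerivAt D (deriv D y) y := by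
    filter_upwards [hv0] with y hy
    exact ((hDv.differentiableOn (by norm_num) y hy).differentiableAt
      (isOpen_interior.mem_nhds hy)).hasDerivAt
  set c1 := deriv D 0 with hc1
  set c2 := iteratedDeriv 2 D 0 with hc2
  have hc10 : c1 ≠ 0 := ne_of_gt hD'0
  have hc20 : c2 ≠ 0 := ne_of_lt hD''0
  -- slope limit for deriv D
  have hB : Tendsto (fun y => (deriv D y - c1) / y) (𝓝[≠] (0:ℝ)) (𝓝 c2) := by
    have := hasDerivAt_iff_tendsto_slope.1 hder2
    refine this.congr (fun y => ?_)
    simp [slope_def_field, div_eq_inv_mul, hc1]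
  have hB' : Tendsto (fun y => (deriv D y - c1) / y) (𝓝[>] (0:ℝ)) (𝓝 c2) :=
    hB.mono_left (nhdsWithin_mono _ (fun y hy => ne_of_gt hy))
  -- second-order Taylor via L'Hopital
  have hC : Tendsto (fun y => (D y - c1 * y) / y ^ 2) (𝓝[>] (0:ℝ)) (𝓝 (c2 / 2)) := by
    apply HasDerivAt.lhopital_zero_nhdsGT
      (f' := fun y => deriv D y - c1) (g' := fun y => 2 * y)
    · filter_upwards [hevd.filter_mono nhdsWithin_le_nhds] with y hy
      exact (hy.sub ((hasDerivAt_id y).const_mul c1)).congr_deriv (by simp)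
    · filter_upwards with y
      simpa using (hasDerivAt_pow 2 y)
    · filter_upwards [self_mem_nhdsWithin] with y (hy : 0 < y)
      positivity
    · have h2' : Tendsto (fun y : ℝ => c1 * y) (𝓝 0) (𝓝 (c1 * 0)) :=
        (continuous_const.mul continuous_id).tendsto (0:ℝ)
      have h1 := hcD.tendsto.sub h2'
      simp only [hD0, mul_zero, sub_zero] at h1
      exact h1.mono_left nhdsWithin_le_nhds
    · have : Tendsto (fun y : ℝ => y ^ 2) (𝓝 0) (𝓝 0) := by
        simpa using (continuous_pow 2).tendsto (0:ℝ)
      exact this.mono_left nhdsWithin_le_nhds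
    · have : Tendsto (fun y => ((deriv D y - c1) / y) / 2) (𝓝[>] (0:ℝ)) (𝓝 (c2 / 2)) :=
        hB'.div_const 2
      refine this.congr (fun y => ?_)
      rw [div_div]
      ring_nf
  -- limit of E(y)/y^2
  have hE : Tendsto (fun y => (D y - (deriv D y) ^ 2 * y / c1) / y ^ 2) (𝓝[>] (0:ℝ))
      (𝓝 (-(3/2) * c2)) := by
    have hterm2 : Tendsto (fun y => -(((deriv D y - c1) / y) * ((deriv D y + c1) / c1)))
        (𝓝[>] (0:ℝ)) (𝓝 (-(c2 * ((c1 + c1) / c1)))) := by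
      refine Tendsto.neg (hB'.mul ?_)
      have hcont : Tendsto (fun y => (deriv D y + c1) / c1) (𝓝 (0:ℝ)) (𝓝 ((c1 + c1)/c1)) :=
        ((hder2.differentiableAt.continuousAt.add tendsto_const_nhds).div_const c1)
      exact hcont.mono_left nhdsWithin_le_nhds
    have hsum := hC.add hterm2
    have hlim : c2 / 2 + -(c2 * ((c1 + c1) / c1)) = -(3/2) * c2 := by
      field_simp
      ring
    rw [hlim] at hsum
    refine hsum.congr' ?_
    filter_upwards [self_mem_nhdsWithin] with y (hy : 0 < y)
    have hy0 : y ≠ 0 := ne_of_gt hy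
    field_simp
    ring
  -- eventual positivity of E
  have hEpos : ∀ᶠ y in 𝓝[>] (0:ℝ), 0 < D y - (deriv D y) ^ 2 * y / c1 := by
    have hpos : (0:ℝ) < -(3/2) * c2 := by nlinarith
    filter_upwards [hE.eventually (eventually_gt_nhds hpos), self_mem_nhdsWithin]
      with y h1 (hy : 0 < y)
    have := mul_pos h1 (pow_pos hy 2)
    rwa [div_mul_cancel₀] at this
    positivity
  -- the squaring map
  have hq : Tendsto (fun ρ : ℝ => ρ ^ 2) (𝓝[>] (0:ℝ)) (𝓝[>] (0:ℝ)) := by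
    apply tendsto_nhdsWithin_of_tendsto_nhds_of_eventually_within
    · have : Tendsto (fun ρ : ℝ => ρ ^ 2) (𝓝 0) (𝓝 0) := by
        simpa using (continuous_pow 2).tendsto (0:ℝ)
      exact this.mono_left nhdsWithin_le_nhds
    · filter_upwards [self_mem_nhdsWithin] with ρ (hρ : 0 < ρ)
      exact pow_pos hρ 2
  have hBq : Tendsto (fun ρ : ℝ => (deriv D (ρ ^ 2) - c1) / ρ ^ 2) (𝓝[>] (0:ℝ)) (𝓝 c2) :=
    hB'.comp hq
  have hEq : Tendsto (fun ρ : ℝ => (D (ρ ^ 2) - (deriv D (ρ ^ 2)) ^ 2 * ρ ^ 2 / c1) / (ρ ^ 2) ^ 2)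
      (𝓝[>] (0:ℝ)) (𝓝 (-(3/2) * c2)) := hE.comp hq
  have hc2q : Tendsto (fun ρ : ℝ => iteratedDeriv 2 D (ρ ^ 2)) (𝓝[>] (0:ℝ)) (𝓝 c2) :=
    hcD''.tendsto.comp (hq.mono_right nhdsWithin_le_nhds)
  have hEposq : ∀ᶠ ρ in 𝓝[>] (0:ℝ), 0 < D (ρ ^ 2) - (deriv D (ρ ^ 2)) ^ 2 * ρ ^ 2 / c1 :=
    hq.eventually hEpos
  have hEne : (-(3/2) * c2) ≠ 0 := by nlinarith
  constructor
  · have hmain := ((hc2q.const_mul 2).mul hBq).div hEq hEne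
    have hval : (2 * c2) * c2 / (-(3/2) * c2) = -(4/3) * c2 := by
      field_simp
      ring
    rw [hval] at hmain
    refine hmain.congr' ?_
    filter_upwards [hEposq, self_mem_nhdsWithin] with ρ hEρ (hρ : 0 < ρ)
    have hρ0 : ρ ≠ 0 := ne_of_gt hρ
    have hEne' : D (ρ ^ 2) - (deriv D (ρ ^ 2)) ^ 2 * ρ ^ 2 / c1 ≠ 0 := ne_of_gt hEρ
    show 2 * iteratedDeriv 2 D (ρ ^ 2) * ((deriv D (ρ ^ 2) - c1) / ρ ^ 2) /
        ((D (ρ ^ 2) - (deriv D (ρ ^ 2)) ^ 2 * ρ ^ 2 / c1) / (ρ ^ 2) ^ 2) = _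
    rw [div_mul_div_comm, Real.mul_self_sqrt hEρ.le, div_div_eq_mul_div,
      div_mul_eq_mul_div, div_eq_div_iff hEne' hEne']
    field_simp
  · have hmain := ((hc2q.const_mul 2).pow 2).div hEq hEne
    have hval : (2 * c2) ^ 2 / (-(3/2) * c2) = -(8/3) * c2 := by
      field_simp
      ring
    rw [hval] at hmain
    refine hmain.congr' ?_
    filter_upwards [hEposq, self_mem_nhdsWithin] with ρ hEρ (hρ : 0 < ρ)
    have hρ0 : ρ ≠ 0 := ne_of_gt hρ
    have hEne' : D (ρ ^ 2) - (deriv D (ρ ^ 2)) ^ 2 * ρ ^ 2 / c1 ≠ 0 := ne_of_gt hEρ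
    show (2 * iteratedDeriv 2 D (ρ ^ 2)) ^ 2 /
        ((D (ρ ^ 2) - (deriv D (ρ ^ 2)) ^ 2 * ρ ^ 2 / c1) / (ρ ^ 2) ^ 2) = _
    conv_rhs => rw [mul_pow, div_pow, Real.sq_sqrt hEρ.le]
    rw [div_div_eq_mul_div, div_mul_eq_mul_div]
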